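/- Every function D : ω → ω ∪ {ω} that (i) is increasing, (ii) satisfies D(0) ∈ {0,1}, and (iii) satisfies D(2) > 0, is the d-function of some countably infinite total algebra A, i.e. d_A(n) = D(n) for all n ∈ ω (where d_A(n) = ω means A^n is not finitely generated). -/

import Mathlib

/-- An algebraic signature: a type of operation symbols with arities. -/
structure Sig where
  ops : Type
  arity : ops → ℕ

/-- An algebra of signature `σ` on carrier `α`. -/
structure Alg (σ : Sig) (α : Type) where
  interp : ∀ f : σ.ops, (Fin (σ.arity f) → α) → α

namespace Alg

variable {σ : Sig} {α : Type}

/-- The subuniverse generated by `G`. -/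
inductive Gen (A : Alg σ α) (G : Set α) : α → Prop
  | base {a : α} : a ∈ G → Gen A G a
  | app (f : σ.ops) (args : Fin (σ.arity f) → α) :
      (∀ i, Gen A G (args i)) → Gen A G (A.interp f args)

/-- `G` generates `A`. -/
def Generates (A : Alg σ α) (G : Set α) : Prop := ∀ a : α, A.Gen G a

/-- The `n`-th direct power of `A`, with operations acting coordinatewise. -/
def pow (A : Alg σ α) (n : ℕ) : Alg σ (Fin n → α) where
  interp f args := fun j => A.interp f fun i => args i j

/-- `A^n` is generated by some set of at most `g` elements. -/
def genBy (A : Alg σ α) (n g : ℕ) : Prop :=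
  ∃ G : Finset (Fin n → α), G.card ≤ g ∧ (A.pow n).Generates ↑G

/-- `d A n`: the least size of a generating set of `A^n`. -/
noncomputable def d (A : Alg σ α) (n : ℕ) : ℕ := sInf {g | A.genBy n g}

/-- `h A g`: the largest `n` such that `A^n` is `g`-generated. -/
noncomputable def h (A : Alg σ α) (g : ℕ) : ℕ := sSup {n | A.genBy n g}

end Alg

/-- The extended (`ℕ∞`-valued) `d`-function: the least cardinality of a
generating set of `A^n`, with value `⊤` (= ω) if `A^n` is not finitely
generated. -/
noncomputable def Alg.dE {σ : Sig} {α : Type} (A : Alg σ α) (n : ℕ) : ℕ∞ :=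
  sInf {g : ℕ∞ | ∃ G : Finset (Fin n → α),
    (G.card : ℕ∞) ≤ g ∧ (A.pow n).Generates ↑G}

namespace Stmt12

/-- Globally distinct odd "designated" values. -/
def val (K N j i : ℕ) : ℕ := 2 * Nat.pair (Nat.pair K N) (Nat.pair j i) + 1

lemma val_ne_zero (K N j i : ℕ) : val K N j i ≠ 0 := by simp [val]

lemma val_inj {K N j i K' N' j' i' : ℕ} (h : val K N j i = val K' N' j' i') :
    K = K' ∧ N = N' ∧ j = j' ∧ i = i' := by
  unfold val at h
  have h2 : Nat.pair (Nat.pair K N) (Nat.pair j i)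
      = Nat.pair (Nat.pair K' N') (Nat.pair j' i') := by omega
  obtain ⟨hKN, hji⟩ := Nat.pair_eq_pair.mp h2
  obtain ⟨hK, hN⟩ := Nat.pair_eq_pair.mp hKN
  obtain ⟨hj, hi⟩ := Nat.pair_eq_pair.mp hji
  exact ⟨hK, hN, hj, hi⟩

/-- Operation symbols for the algebra realizing `D`. -/
inductive Ops (D : ℕ → ℕ∞) : Type
  | F (K N : ℕ) (w : Fin N → ℕ) (hK : 1 ≤ K) (hN : 1 ≤ N) (hD : D N ≤ (K : ℕ∞)) : Ops D
  | C (m : ℕ) (h : D 1 = 0) : Ops D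
  | Z (h : D 0 = 0) : Ops D

def arity {D : ℕ → ℕ∞} : Ops D → ℕ
  | .F K _ _ _ _ _ => K
  | .C _ _ => 0
  | .Z _ => 0

def sig (D : ℕ → ℕ∞) : Sig := ⟨Ops D, arity⟩

open Classical in
noncomputable def alg (D : ℕ → ℕ∞) : Alg (sig D) ℕ where
  interp f := match f with
    | .F K N w _ _ _ => fun args =>
        if h : ∃ j : Fin N, ∀ i : Fin K, args i = val K N j i then w h.choose else 0
    | .C m _ => fun _ => m
    | .Z _ => fun _ => 0

section

variable {D : ℕ → ℕ∞}

/-- Core lower bound: any injective, nowhere-zero generated tuple is either a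
generator or witnesses `D n ≤ |G|`. -/
lemma low (hmono : Monotone D) {n : ℕ} (hn : 1 ≤ n)
    (G : Finset (Fin n → ℕ)) {a : Fin n → ℕ}
    (hgen : ((alg D).pow n).Gen ↑G a) :
    Function.Injective a → (∀ j, a j ≠ 0) → (a ∈ G ∨ D n ≤ (G.card : ℕ∞)) := by
  induction hgen with
  | base h => intro _ _; exact Or.inl (by exact_mod_cast h)
  | app f args hargs ih =>
    intro hinj hnz
    cases f with
    | Z h =>
      exact absurd rfl (hnz ⟨0, hn⟩)
    | C m h =>
      rcases Nat.lt_or_ge n 2 with h2 | h2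
      · right
        have hn1 : n = 1 := by omega
        subst hn1
        rw [h]
        exact zero_le
      · exfalso
        have : (⟨0, by omega⟩ : Fin n) = ⟨1, by omega⟩ := hinj rfl
        simp [Fin.ext_iff] at this
    | F K N w hK hN hD =>
      have hx : ∀ j, ((alg D).pow n).interp (Ops.F K N w hK hN hD) args j
          = if h : ∃ m : Fin N, ∀ i : Fin K, args i j = val K N m i then w h.choose else 0 :=
        fun j => dite_congr rfl (fun _ => rfl) (fun _ => rfl)
      have fire : ∀ j, ∃ m : Fin N, ∀ i : Fin K, args i j = val K N m i := by
        intro j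
        by_contra hc
        exact hnz j (by rw [hx j, dif_neg hc])
      set m : Fin n → Fin N := fun j => (fire j).choose with hmdef
      have hm : ∀ j i, args i j = val K N (m j) i := fun j => (fire j).choose_spec
      have hxw : ∀ j, ((alg D).pow n).interp (Ops.F K N w hK hN hD) args j = w (m j) := by
        intro j; rw [hx j]; exact dif_pos (fire j)
      have minj : Function.Injective m := by
        intro j j' hjj
        apply hinj
        rw [hxw j, hxw j', hjj]
      have hnN : n ≤ N := by
        have := Fintype.card_le_of_injective m minj
        simpa using this
      by_cases hall : ∀ i, args i ∈ G
      · right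
        have hargsinj : Function.Injective fun i : Fin K => (⟨args i, hall i⟩ : {x // x ∈ G}) := by
          intro i i' hii
          have hv : args i = args i' := congrArg Subtype.val hii
          have := congrFun hv ⟨0, hn⟩
          rw [hm _ i, hm _ i'] at this
          exact Fin.ext (val_inj this).2.2.2
        have hKG : K ≤ G.card := by
          have := Fintype.card_le_of_injective _ hargsinj
          simpa [Fintype.card_coe] using this
        calc D n ≤ D N := hmono hnN
          _ ≤ (K : ℕ∞) := hD
          _ ≤ (G.card : ℕ∞) := by exact_mod_cast hKG
      · push_neg at hall
        obtain ⟨i, hi⟩ := hall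
        have hainj : Function.Injective (args i) := by
          intro j j' hjj
          rw [hm j i, hm j' i] at hjj
          exact minj (Fin.ext (val_inj hjj).2.2.1)
        have hanz : ∀ j, args i j ≠ 0 := by
          intro j; rw [hm j i]; exact val_ne_zero _ _ _ _
        rcases ih i hainj hanz with h | h
        · exact absurd (by exact_mod_cast h) hi
        · exact Or.inr h

/-- A generic tuple: injective, nowhere zero, with prescribed large first value. -/
lemma wlemma {n : ℕ} (hn : 1 ≤ n) (M : ℕ) :
    ∃ w : Fin n → ℕ, Function.Injective w ∧ (∀ j, w j ≠ 0) ∧ w ⟨0, hn⟩ = M + 1 := by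
  refine ⟨fun j => if (j : ℕ) = 0 then M + 1 else M + 2 + (j : ℕ), ?_, ?_, by simp⟩
  · intro j j' hjj
    simp only at hjj
    apply Fin.ext
    by_cases e1 : (j : ℕ) = 0 <;> by_cases e2 : (j' : ℕ) = 0
    · omega
    · rw [if_pos e1, if_neg e2] at hjj; omega
    · rw [if_neg e1, if_pos e2] at hjj; omega
    · rw [if_neg e1, if_neg e2] at hjj; omega
  · intro j
    dsimp only
    split <;> omega

/-- Lower bound: any generating set of `A^n` (n ≥ 1) has at least `D n` elements. -/
lemma lower (hmono : Monotone D) {n : ℕ} (hn : 1 ≤ n)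
    (G : Finset (Fin n → ℕ)) (hgen : ((alg D).pow n).Generates ↑G) :
    D n ≤ (G.card : ℕ∞) := by
  obtain ⟨w, winj, wnz, hw0⟩ := wlemma hn (G.sup fun g => g ⟨0, hn⟩)
  have wnotG : w ∉ G := by
    intro hmem
    have h1 := Finset.le_sup (f := fun g => g ⟨0, hn⟩) hmem
    rw [hw0] at h1
    exact Nat.not_succ_le_self _ h1
  rcases low hmono hn G (hgen w) winj wnz with h | h
  · exact absurd h wnotG
  · exact h

/-- In `A^0`, nothing is generated from the empty set when there are no constants. -/
lemma zeroGen (h1 : D 0 = 1) (hmono : Monotone D) {a : Fin 0 → ℕ}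
    (hgen : ((alg D).pow 0).Gen (↑(∅ : Finset (Fin 0 → ℕ))) a) : False := by
  induction hgen with
  | base h => simp at h
  | app f args hargs ih =>
    cases f with
    | Z h => rw [h1] at h; exact one_ne_zero h
    | C m h =>
      have : D 0 ≤ D 1 := hmono (by omega)
      rw [h1, h] at this
      exact absurd this (by simp)
    | F K N w hK hN hD => exact ih ⟨0, hK⟩

/-- Upper bound: generators for `A^n` when `D n = k ≥ 1`. -/
lemma upperF (hmono : Monotone D) {n k : ℕ} (hn : 1 ≤ n) (hk : 1 ≤ k)
    (hD : D n ≤ (k : ℕ∞)) :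
    ∃ G : Finset (Fin n → ℕ), G.card ≤ k ∧ ((alg D).pow n).Generates ↑G := by
  set g : Fin k → (Fin n → ℕ) := fun i j => val k n j i with hg
  refine ⟨Finset.image g Finset.univ, ?_, ?_⟩
  · exact Finset.card_image_le.trans (by simp)
  · intro a
    have key : ((alg D).pow n).interp (Ops.F k n a hk hn hD) (fun i => g i) = a := by
      funext j
      rw [show ((alg D).pow n).interp (Ops.F k n a hk hn hD) (fun i => g i) j = (if h : ∃ j' : Fin n, ∀ i : Fin k, g i j = val k n j' i then a h.choose else 0) from dite_congr rfl (fun _ => rfl) (fun _ => rfl)]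
      have hfire : ∃ j' : Fin n, ∀ i : Fin k, g i j = val k n j' i := ⟨j, fun i => rfl⟩
      rw [dif_pos hfire]
      have hspec := hfire.choose_spec ⟨0, hk⟩
      simp only [hg] at hspec
      have : (j : ℕ) = (hfire.choose : ℕ) := (val_inj hspec).2.2.1
      rw [← Fin.ext this]
    rw [← key]
    exact Alg.Gen.app _ _ fun i => Alg.Gen.base (by simp; exact ⟨i, rfl⟩)

end

end Stmt12

/-- every function `D : ω → ω ∪ {ω}` that is increasing, has
`D 0 ∈ {0,1}` and `D 2 > 0` is the `d`-function of some countably infinite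
total algebra. -/
theorem stmt_12 (D : ℕ → ℕ∞) (hmono : Monotone D)
    (h0 : D 0 = 0 ∨ D 0 = 1) (h2 : 0 < D 2) :
    ∃ (σ : Sig) (A : Alg σ ℕ), ∀ n : ℕ, A.dE n = D n := by
  classical
  refine ⟨Stmt12.sig D, Stmt12.alg D, fun n => ?_⟩
  unfold Alg.dE
  apply le_antisymm
  · -- sInf ≤ D n : exhibit a generating set of size D n when finite
    rcases eq_or_ne (D n) ⊤ with htop | hfin
    · rw [htop]; exact le_top
    · lift D n to ℕ using hfin with k hk
      apply sInf_le
      rcases Nat.eq_zero_or_pos n with rfl | hn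
      · -- n = 0
        rcases h0 with h00 | h01
        · -- D 0 = 0 : empty set generates via the nullary op Z
          refine ⟨∅, by simp, fun a => ?_⟩
          have : a = ((Stmt12.alg D).pow 0).interp (Stmt12.Ops.Z h00) (fun i => i.elim0) :=
            funext fun j => j.elim0
          rw [this]
          exact Alg.Gen.app _ _ fun i => i.elim0
        · -- D 0 = 1 : the singleton generates
          refine ⟨{fun _ => 0}, ?_, fun a => ?_⟩
          · have : k = 1 := by
              have := h01; rw [← hk] at this; exact_mod_cast this
            simp [this]
          · have : a = (fun _ => 0 : Fin 0 → ℕ) := funext fun j => j.elim0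
            rw [this]
            exact Alg.Gen.base (by simp)
      · rcases Nat.eq_zero_or_pos k with rfl | hkpos
        · -- D n = 0 with n ≥ 1 forces n = 1 and D 1 = 0 : constants generate
          have hn1 : n = 1 := by
            by_contra hne
            have h2n : 2 ≤ n := by omega
            have := (h2.trans_le (hmono h2n)).ne'
            exact this (by exact_mod_cast hk.symm)
          subst hn1
          have hD1 : D 1 = 0 := by exact_mod_cast hk.symm
          refine ⟨∅, by simp, fun a => ?_⟩
          have : a = ((Stmt12.alg D).pow 1).interp (Stmt12.Ops.C (a 0) hD1)
              (fun i => i.elim0) := by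
            funext j
            have : j = 0 := Subsingleton.elim j 0
            rw [this]; rfl
          rw [this]
          exact Alg.Gen.app _ _ fun i => i.elim0
        · obtain ⟨G, hGc, hGgen⟩ := Stmt12.upperF hmono hn hkpos (le_of_eq hk.symm)
          exact ⟨G, by exact_mod_cast hGc, hGgen⟩
  · -- D n ≤ sInf : every generating set has ≥ D n elements
    apply le_sInf
    rintro g ⟨G, hGc, hGgen⟩
    rcases Nat.eq_zero_or_pos n with rfl | hn
    · rcases h0 with h00 | h01
      · rw [h00]; exact zero_le
      · rw [h01]
        refine le_trans ?_ hGc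
        have hGne : G.Nonempty := by
          rcases G.eq_empty_or_nonempty with rfl | hne
          · exact absurd (hGgen (fun j => 0)) (fun h => Stmt12.zeroGen h01 hmono h)
          · exact hne
        exact_mod_cast Finset.one_le_card.mpr hGne
    · exact le_trans (Stmt12.lower hmono hn G hGgen) hGc
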